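/- Let G be a second countable LCA group, H a countable uniform lattice, Δ its annihilator, Ω a Borel section of Ĝ/Δ. If φ ∈ L¹(Ω) satisfies ∫_Ω γ(h)⁻¹ φ(γ) dm_Ĝ(γ) = 0 for all h ∈ H, then φ = 0 almost everywhere on Ω. -/

import Mathlib

/-- The annihilator of a subgroup `H` of `G` inside the Pontryagin dual of `G`:
the set of continuous characters of `G` that are trivial on `H`. -/
def annihilator {G : Type*} [CommGroup G] [TopologicalSpace G] [IsTopologicalGroup G]
    (H : Subgroup G) : Subgroup (PontryaginDual G) where
  carrier := {γ | ∀ h ∈ H, γ h = 1}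
  one_mem' := by intro h hh; rfl
  mul_mem' := by
    intro γ γ' hγ hγ' h hh
    show γ h * γ' h = 1
    rw [hγ h hh, hγ' h hh, one_mul]
  inv_mem' := by
    intro γ hγ h hh
    show (γ h)⁻¹ = 1
    rw [hγ h hh, inv_one]


open MeasureTheory
open scoped ENNReal NNReal

noncomputable instance : MeasurableSpace Circle := borel Circle
instance : BorelSpace Circle := ⟨rfl⟩

/-- A compact T2 second-countable space is Polish. -/
lemma polishSpace_of_compactSpace' {X : Type*} [TopologicalSpace X] [CompactSpace X]
    [T2Space X] [SecondCountableTopology X] : PolishSpace X := by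
  letI : MetricSpace X := TopologicalSpace.metrizableSpaceMetric X
  infer_instance

/-- Lusin–Souslin for continuous maps injective on a measurable subset of a compact set,
in a second-countable locally compact setting. -/
lemma measurableSet_image_inter_compact {D T : Type*} [TopologicalSpace D] [T2Space D]
    [SecondCountableTopology D] [MeasurableSpace D] [BorelSpace D]
    [TopologicalSpace T] [T2Space T] [MeasurableSpace T] [OpensMeasurableSpace T]
    {f : D → T} (hf : Continuous f) {s K : Set D} (hs : MeasurableSet s)
    (hK : IsCompact K) (hinj : Set.InjOn f s) : MeasurableSet (f '' (K ∩ s)) := by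
  haveI : CompactSpace K := isCompact_iff_compactSpace.mp hK
  haveI : PolishSpace K := polishSpace_of_compactSpace'
  have h1 : f '' (K ∩ s) = (f ∘ (Subtype.val : K → D)) '' (Subtype.val ⁻¹' s) := by
    rw [Set.image_comp, Subtype.image_preimage_coe]
  rw [h1]
  apply MeasurableSet.image_of_continuousOn_injOn
  · exact measurable_subtype_coe hs
  · exact (hf.comp continuous_subtype_val).continuousOn
  · intro x hx y hy hxy
    exact Subtype.ext (hinj hx hy hxy)

/-- If `φ ∈ L¹(Ω)` (with `Ω` a Borel section of `Ĝ ⧸ Δ`) satisfies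
`∫_Ω γ(h)⁻¹ φ(γ) dμ(γ) = 0` for all `h ∈ H`, then `φ = 0` a.e. on `Ω`. -/
theorem eq_zero_of_fourier_coefficients_eq_zero
    (G : Type*) [CommGroup G] [TopologicalSpace G] [IsTopologicalGroup G]
    [LocallyCompactSpace G] [T2Space G] [SecondCountableTopology G]
    (H : Subgroup G) [Countable ↥H] (hHdisc : DiscreteTopology ↥H)
    (hHcocompact : CompactSpace (G ⧸ H))
    [MeasurableSpace (PontryaginDual G)] [BorelSpace (PontryaginDual G)]
    (μ : Measure (PontryaginDual G)) [μ.IsHaarMeasure]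
    (Ω : Set (PontryaginDual G)) (hΩmeas : MeasurableSet Ω)
    (hΩ : ∀ γ : PontryaginDual G, ∃! ω : PontryaginDual G, ω ∈ Ω ∧ ω⁻¹ * γ ∈ annihilator H)
    (φ : PontryaginDual G → ℂ)
    (hφ : Integrable φ (μ.restrict Ω))
    (hcoef : ∀ h : ↥H,
      ∫ γ, ((γ (h : G) : Circle) : ℂ)⁻¹ * φ γ ∂(μ.restrict Ω) = 0) :
    φ =ᵐ[μ.restrict Ω] 0 := by
  classical
  -- the dual group is second countable
  haveI : SecondCountableTopology (PontryaginDual G) :=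
    (ContinuousMonoidHom.isInducing_toContinuousMap G Circle).secondCountableTopology
  -- the target product space
  set T := (↥H → Circle) with hT
  -- the evaluation map
  set Φ : PontryaginDual G → T := fun γ h => γ (h : G) with hΦ
  have hΦc : Continuous Φ := by
    refine continuous_pi fun h => ?_
    have h1 : Continuous (ContinuousMonoidHom.toContinuousMap :
        PontryaginDual G → C(G, Circle)) :=
      (ContinuousMonoidHom.isInducing_toContinuousMap G Circle).continuous
    have h2 : Continuous fun f : C(G, Circle) => f (h : G) :=
      continuous_eval_const _
    exact h2.comp h1
  have hΦm : Measurable Φ := hΦc.measurable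
  -- Φ is injective on Ω
  have hΦinj : Set.InjOn Φ Ω := by
    intro γ hγ γ' hγ' hΦγ
    have key : ∀ x ∈ H, (γ⁻¹ * γ') x = 1 := by
      intro x hx
      have : γ x = γ' x := congrFun hΦγ ⟨x, hx⟩
      show (γ x)⁻¹ * γ' x = 1
      rw [this, inv_mul_cancel]
    obtain ⟨ω, -, huniq⟩ := hΩ γ'
    have h1 : γ = ω := huniq γ ⟨hγ, key⟩
    have h2 : γ' = ω := huniq γ' ⟨hγ', fun x hx => by
      show (γ' x)⁻¹ * γ' x = 1; rw [inv_mul_cancel]⟩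
    rw [h1, h2]
  -- reduce to a measurable representative of φ
  obtain ⟨φ', hφ'sm, hφeq⟩ := hφ.1
  have hφ'meas : Measurable φ' := hφ'sm.measurable
  have hφ'int : Integrable φ' (μ.restrict Ω) := hφ.congr hφeq
  suffices hS : φ' =ᵐ[μ.restrict Ω] 0 from hφeq.trans hS
  have hcoef' : ∀ h : ↥H,
      ∫ γ, ((γ (h : G) : Circle) : ℂ)⁻¹ * φ' γ ∂(μ.restrict Ω) = 0 := by
    intro h
    rw [← hcoef h]
    refine integral_congr_ae (hφeq.symm.mono fun γ hγ => ?_)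
    dsimp only
    rw [hγ]
  -- the integration functional against continuous kernels
  have hint : ∀ f : C(T, ℂ), Integrable (fun γ => f (Φ γ) * φ' γ) (μ.restrict Ω) := by
    intro f
    refine hφ'int.bdd_mul (c := ‖f‖) ?_ (Filter.Eventually.of_forall fun γ => f.norm_coe_le_norm _)
    exact (f.continuous.comp hΦc).aestronglyMeasurable
  set I : C(T, ℂ) → ℂ := fun f => ∫ γ, f (Φ γ) * φ' γ ∂(μ.restrict Ω) with hI
  have hIadd : ∀ f g : C(T, ℂ), I (f + g) = I f + I g := by
    intro f g
    simp only [hI]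
    rw [← integral_add (hint f) (hint g)]
    refine integral_congr_ae (Filter.Eventually.of_forall fun γ => ?_)
    simp [add_mul]
  have hIsmul : ∀ (c : ℂ) (f : C(T, ℂ)), I (c • f) = c * I f := by
    intro c f
    simp only [hI]
    rw [← smul_eq_mul, ← integral_smul]
    refine integral_congr_ae (Filter.Eventually.of_forall fun γ => ?_)
    simp [smul_eq_mul, mul_assoc]
  -- the coordinate functions
  set π : ↥H → C(T, ℂ) := fun h =>
    ⟨fun x => (x h : ℂ), continuous_induced_dom.comp (continuous_apply h)⟩ with hπ
  -- monomials are characters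
  have hP : ∀ f ∈ Submonoid.closure (Set.range π ∪ star (Set.range π)),
      ∃ h : ↥H, ∀ γ : PontryaginDual G, f (Φ γ) = ((γ (h : G) : Circle) : ℂ) := by
    intro f hf
    induction hf using Submonoid.closure_induction with
    | mem f hf =>
      rcases hf with ⟨h, rfl⟩ | hf
      · exact ⟨h, fun γ => rfl⟩
      · rw [Set.mem_star] at hf
        obtain ⟨h, hh⟩ := hf
        refine ⟨h⁻¹, fun γ => ?_⟩
        have : f = star (π h) := by rw [hh, star_star]
        rw [this]
        show (starRingEnd ℂ) ((π h) (Φ γ)) = _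
        have : (π h) (Φ γ) = ((γ (h : G) : Circle) : ℂ) := rfl
        rw [this, ← Circle.coe_inv_eq_conj, ← map_inv γ]
        norm_cast
    | one => exact ⟨1, fun γ => by simp⟩
    | mul f g _ _ hf hg =>
      obtain ⟨h₁, hh₁⟩ := hf
      obtain ⟨h₂, hh₂⟩ := hg
      refine ⟨h₁ * h₂, fun γ => ?_⟩
      show f (Φ γ) * g (Φ γ) = _
      rw [hh₁, hh₂]
      rw [Subgroup.coe_mul, map_mul, Circle.coe_mul]
  -- the functional vanishes on characters
  have hbase : ∀ f : C(T, ℂ),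
      (∃ h : ↥H, ∀ γ : PontryaginDual G, f (Φ γ) = ((γ (h : G) : Circle) : ℂ)) → I f = 0 := by
    rintro f ⟨h, hh⟩
    have := hcoef' h⁻¹
    rw [← this]
    refine integral_congr_ae (Filter.Eventually.of_forall fun γ => ?_)
    dsimp only
    rw [hh γ]
    congr 1
    push_cast
    rw [map_inv γ]
    push_cast
    rw [inv_inv]
  -- the functional vanishes on the star subalgebra generated by the coordinates
  have hspan : ∀ f ∈ StarAlgebra.adjoin ℂ (Set.range π), I f = 0 := by
    intro f hf
    have hf' : f ∈ Submodule.span ℂ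
        ((Submonoid.closure (Set.range π ∪ star (Set.range π)) : Submonoid C(T, ℂ)) :
          Set C(T, ℂ)) := by
      rw [← StarAlgebra.adjoin_eq_span]
      exact hf
    clear hf
    induction hf' using Submodule.span_induction with
    | mem g hg => exact hbase g (hP g hg)
    | zero =>
      simp only [hI]
      simpa using integral_congr_ae
        (Filter.Eventually.of_forall fun γ => by simp : ∀ᵐ γ ∂(μ.restrict Ω),
          ((0 : C(T, ℂ)) (Φ γ) * φ' γ) = (0 : ℂ))
    | add g₁ g₂ _ _ h₁ h₂ => rw [hIadd g₁ g₂, h₁, h₂, add_zero]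
    | smul c g _ hg => rw [hIsmul c g, hg, mul_zero]
  -- the functional is continuous
  have hbound : ∀ f : C(T, ℂ), ‖I f‖ ≤ (∫ γ, ‖φ' γ‖ ∂(μ.restrict Ω)) * ‖f‖ := by
    intro f
    refine (norm_integral_le_integral_norm _).trans ?_
    have h1 : ∀ γ, ‖f (Φ γ) * φ' γ‖ ≤ ‖f‖ * ‖φ' γ‖ := by
      intro γ
      rw [norm_mul]
      exact mul_le_mul_of_nonneg_right (f.norm_coe_le_norm _) (norm_nonneg _)
    refine le_trans (integral_mono (hint f).norm (hφ'int.norm.const_mul ‖f‖) h1) ?_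
    rw [integral_const_mul]
    exact le_of_eq (mul_comm _ _)
  have hIcont : Continuous I := by
    let L : C(T, ℂ) →ₗ[ℂ] ℂ :=
      { toFun := I
        map_add' := hIadd
        map_smul' := hIsmul }
    exact (L.mkContinuous _ hbound).cont
  -- density via Stone–Weierstrass
  have hsep : (StarAlgebra.adjoin ℂ (Set.range π)).SeparatesPoints := by
    intro x y hxy
    obtain ⟨h, hh⟩ := Function.ne_iff.mp hxy
    refine ⟨_, ⟨π h, StarAlgebra.subset_adjoin ℂ _ ⟨h, rfl⟩, rfl⟩, ?_⟩
    simpa [hπ, Circle.coe_inj] using hh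
  have hdense := ContinuousMap.starSubalgebra_topologicalClosure_eq_top_of_separatesPoints
    (StarAlgebra.adjoin ℂ (Set.range π)) hsep
  have hIall : ∀ f : C(T, ℂ), I f = 0 := by
    have hsub : closure ((StarAlgebra.adjoin ℂ (Set.range π) : Set C(T, ℂ)))
        ⊆ {f | I f = 0} :=
      closure_minimal hspan (isClosed_singleton.preimage hIcont)
    intro f
    apply hsub
    have : f ∈ (StarAlgebra.adjoin ℂ (Set.range π)).topologicalClosure := by
      rw [hdense]; trivial
    exact this
  -- the pushforward mass measure on T
  set ν : Measure (PontryaginDual G) :=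
    (μ.restrict Ω).withDensity (fun γ => (‖φ' γ‖₊ : ℝ≥0∞)) with hν
  set ρ : Measure T := ν.map Φ with hρ
  haveI hρfin : IsFiniteMeasure ρ := by
    constructor
    rw [hρ, Measure.map_apply hΦm MeasurableSet.univ, Set.preimage_univ, hν,
      withDensity_apply _ MeasurableSet.univ, setLIntegral_univ]
    exact hφ'int.2
  -- vanishing against indicators of measurable sets
  have hkey : ∀ t : Set T, MeasurableSet t →
      ∫ γ, Set.indicator t (fun _ => (1 : ℂ)) (Φ γ) * φ' γ ∂(μ.restrict Ω) = 0 := by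
    intro t ht
    set ind : T → ℂ := Set.indicator t (fun _ => (1 : ℂ)) with hind
    have hindm : Measurable ind := measurable_const.indicator ht
    have hJint : Integrable (fun γ => ind (Φ γ) * φ' γ) (μ.restrict Ω) := by
      refine hφ'int.bdd_mul ((hindm.comp hΦm).aestronglyMeasurable) (c := 1) (Filter.Eventually.of_forall fun γ => ?_)
      by_cases hmem : Φ γ ∈ t <;> simp [hind, Set.indicator_apply, hmem]
    set J : ℂ := ∫ γ, ind (Φ γ) * φ' γ ∂(μ.restrict Ω) with hJ
    have hz : ∀ ε : ℝ≥0∞, ε ≠ 0 → (‖J‖₊ : ℝ≥0∞) ≤ ε := by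
      intro ε hε
      have hind_int : Integrable ind ρ := (integrable_const (1 : ℂ)).indicator ht
      obtain ⟨g, hg, -⟩ := hind_int.exists_boundedContinuous_lintegral_sub_le hε
      have hgint : Integrable (fun γ => g (Φ γ) * φ' γ) (μ.restrict Ω) :=
        hint ⟨fun x => g x, g.continuous⟩
      have hg0 : ∫ γ, g (Φ γ) * φ' γ ∂(μ.restrict Ω) = 0 := hIall ⟨fun x => g x, g.continuous⟩
      have hJeq : J = ∫ γ, (ind (Φ γ) - g (Φ γ)) * φ' γ ∂(μ.restrict Ω) := by
        have h3 : ∫ γ, (ind (Φ γ) - g (Φ γ)) * φ' γ ∂(μ.restrict Ω)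
            = (∫ γ, ind (Φ γ) * φ' γ ∂(μ.restrict Ω))
              - ∫ γ, g (Φ γ) * φ' γ ∂(μ.restrict Ω) := by
          simp_rw [sub_mul]
          exact integral_sub hJint hgint
        rw [h3, hg0, sub_zero, hJ]
      have hFm : Measurable fun x : T => (‖ind x - g x‖₊ : ℝ≥0∞) :=
        (hindm.sub g.continuous.measurable).nnnorm.coe_nnreal_ennreal
      have h4 : ∫⁻ γ, (‖ind (Φ γ) - g (Φ γ)‖₊ : ℝ≥0∞) ∂ν
          = ∫⁻ γ, (‖φ' γ‖₊ : ℝ≥0∞) * (‖ind (Φ γ) - g (Φ γ)‖₊ : ℝ≥0∞) ∂(μ.restrict Ω) := by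
        rw [hν, lintegral_withDensity_eq_lintegral_mul _ hφ'meas.nnnorm.coe_nnreal_ennreal
          (show Measurable fun γ : PontryaginDual G => (‖ind (Φ γ) - g (Φ γ)‖₊ : ℝ≥0∞) from
            hFm.comp hΦm)]
        rfl
      have h5 : ∫⁻ x, (‖ind x - g x‖₊ : ℝ≥0∞) ∂ρ
          = ∫⁻ γ, (‖ind (Φ γ) - g (Φ γ)‖₊ : ℝ≥0∞) ∂ν := by
        rw [hρ]
        exact lintegral_map hFm hΦm
      calc (‖J‖₊ : ℝ≥0∞)
          ≤ ∫⁻ γ, ‖(ind (Φ γ) - g (Φ γ)) * φ' γ‖₊ ∂(μ.restrict Ω) := by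
            rw [hJeq]; exact enorm_integral_le_lintegral_enorm _
        _ = ∫⁻ γ, (‖φ' γ‖₊ : ℝ≥0∞) * (‖ind (Φ γ) - g (Φ γ)‖₊ : ℝ≥0∞) ∂(μ.restrict Ω) := by
            refine lintegral_congr fun γ => ?_
            rw [nnnorm_mul, ENNReal.coe_mul, mul_comm]
        _ = ∫⁻ γ, (‖ind (Φ γ) - g (Φ γ)‖₊ : ℝ≥0∞) ∂ν := h4.symm
        _ = ∫⁻ x, (‖ind x - g x‖₊ : ℝ≥0∞) ∂ρ := h5.symm
        _ ≤ ε := hg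
    have hJ0 : (‖J‖₊ : ℝ≥0∞) = 0 := by
      refine le_antisymm ?_ zero_le
      refine ENNReal.le_of_forall_pos_le_add fun ε hε _ => ?_
      simpa using hz ε (by exact_mod_cast hε.ne')
    have : J = 0 := by simpa using hJ0
    simpa [hJ] using this
  -- conclude via vanishing of all set integrals
  refine hφ'int.ae_eq_zero_of_forall_setIntegral_eq_zero fun s hs _ => ?_
  set t : Set T := ⋃ n, Φ '' (compactCovering (PontryaginDual G) n ∩ (s ∩ Ω)) with htdef
  have ht : MeasurableSet t := by
    refine MeasurableSet.iUnion fun n => ?_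
    exact measurableSet_image_inter_compact hΦc (hs.inter hΩmeas)
      (isCompact_compactCovering _ n) (hΦinj.mono Set.inter_subset_right)
  have hteq : ∀ γ ∈ Ω, Set.indicator t (fun _ => (1 : ℂ)) (Φ γ)
      = Set.indicator s (fun _ => (1 : ℂ)) γ := by
    intro γ hγ
    by_cases hγs : γ ∈ s
    · have h1 : Φ γ ∈ t := by
        obtain ⟨n, hn⟩ : ∃ n, γ ∈ compactCovering (PontryaginDual G) n := by
          have h2 : γ ∈ ⋃ n, compactCovering (PontryaginDual G) n := by
            rw [iUnion_compactCovering]; trivial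
          exact Set.mem_iUnion.mp h2
        exact Set.mem_iUnion.mpr ⟨n, ⟨γ, ⟨hn, hγs, hγ⟩, rfl⟩⟩
      simp [h1, hγs]
    · have h1 : Φ γ ∉ t := by
        intro hmem
        obtain ⟨n, hn⟩ := Set.mem_iUnion.mp hmem
        obtain ⟨γ', ⟨-, hγ's, hγ'Ω⟩, heq⟩ := hn
        exact hγs (hΦinj hγ'Ω hγ heq ▸ hγ's)
      simp [h1, hγs]
  calc ∫ x in s, φ' x ∂(μ.restrict Ω)
      = ∫ γ, Set.indicator s (fun _ => (1 : ℂ)) γ * φ' γ ∂(μ.restrict Ω) := by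
        rw [← integral_indicator hs]
        refine integral_congr_ae (Filter.Eventually.of_forall fun γ => ?_)
        by_cases hγs : γ ∈ s <;> simp [Set.indicator_apply, hγs]
    _ = ∫ γ, Set.indicator t (fun _ => (1 : ℂ)) (Φ γ) * φ' γ ∂(μ.restrict Ω) := by
        refine integral_congr_ae ?_
        filter_upwards [ae_restrict_mem hΩmeas] with γ hγ
        rw [hteq γ hγ]
    _ = 0 := hkey t ht
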